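/- Let v = λcr²η > 0 and let u ≥ 1 be a solution of the cubic-type equation u³ - v·u² + (η·e^{-θr^α/ρ}·e^{-v/u} - 1)·u - v = 0. If v ≤ 1, then the function f(u) = u³ - vu² + (η e^{-θr^α/ρ} e^{-v/u} - 1)u - v is strictly increasing on [1, ∞), so this equation has at most one root u ≥ 1. -/

import Mathlib

/-- for v = λcr²η ∈ (0,1], the function
f(u) = u³ - vu² + (η·e^{-θr^α/ρ}·e^{-v/u} - 1)u - v is strictly increasing on
[1,∞), hence the equation f(u) = 0 has at most one root u ≥ 1. -/
theorem stmt_16 (η θ r α ρ v : ℝ)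
    (hη : η ∈ Set.Ioc (0:ℝ) 1) (hθ : 0 < θ) (hr : 0 < r) (hα : 0 < α)
    (hρ : 0 < ρ) (hv : 0 < v) (hv1 : v ≤ 1)
    (f : ℝ → ℝ)
    (hf : ∀ u, f u = u ^ 3 - v * u ^ 2
      + (η * Real.exp (-(θ * r ^ α / ρ)) * Real.exp (-(v / u)) - 1) * u - v) :
    StrictMonoOn f (Set.Ici (1:ℝ)) ∧
    ∀ u₁ ∈ Set.Ici (1:ℝ), ∀ u₂ ∈ Set.Ici (1:ℝ),
      f u₁ = 0 → f u₂ = 0 → u₁ = u₂ := by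
  obtain ⟨hη0, hη1⟩ := hη
  set c := η * Real.exp (-(θ * r ^ α / ρ)) with hc
  have hc0 : 0 < c := by positivity
  have hfeq : f = fun u => u ^ 3 - v * u ^ 2 + (c * Real.exp (-(v / u)) - 1) * u - v :=
    funext hf
  have hderiv : ∀ x ∈ Set.Ioi (1:ℝ), HasDerivAt f
      (3 * x ^ 2 - v * (2 * x) +
        ((c * Real.exp (-(v / x)) * (v * (x ^ 2)⁻¹)) * x
          + (c * Real.exp (-(v / x)) - 1) * 1)) x := by
    intro x hx
    have hx1 : (1:ℝ) < x := hx
    have hx0 : x ≠ 0 := by linarith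
    rw [hfeq]
    have hinner : HasDerivAt (fun u : ℝ => -(v / u)) (v * (x ^ 2)⁻¹) x := by
      have h1 : HasDerivAt (fun u : ℝ => v / u) (v * -(x ^ 2)⁻¹) x :=
        (hasDerivAt_inv hx0).const_mul v
      have h2 := h1.neg
      rw [show v * (x ^ 2)⁻¹ = -(v * -(x ^ 2)⁻¹) by ring]
      exact h2
    have hexp : HasDerivAt (fun u : ℝ => c * Real.exp (-(v / u)) - 1)
        (c * Real.exp (-(v / x)) * (v * (x ^ 2)⁻¹)) x := by
      have := (hinner.exp.const_mul c).sub_const 1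
      rw [mul_assoc]
      exact this
    have hmul : HasDerivAt (fun u : ℝ => (c * Real.exp (-(v / u)) - 1) * u)
        ((c * Real.exp (-(v / x)) * (v * (x ^ 2)⁻¹)) * x
          + (c * Real.exp (-(v / x)) - 1) * 1) x :=
      hexp.mul (hasDerivAt_id x)
    have hpow3 : HasDerivAt (fun u : ℝ => u ^ 3) (3 * x ^ 2) x := by
      simpa using hasDerivAt_pow 3 x
    have hpow2 : HasDerivAt (fun u : ℝ => v * u ^ 2) (v * (2 * x)) x := by
      simpa using (hasDerivAt_pow 2 x).const_mul v
    exact (((hpow3.sub hpow2).add hmul).sub_const v)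
  have hpos : ∀ x ∈ Set.Ioi (1:ℝ),
      0 < 3 * x ^ 2 - v * (2 * x) +
        ((c * Real.exp (-(v / x)) * (v * (x ^ 2)⁻¹)) * x
          + (c * Real.exp (-(v / x)) - 1) * 1) := by
    intro x hx
    have hx1 : (1:ℝ) < x := hx
    have hx0 : (0:ℝ) < x := by linarith
    have hE : 0 < Real.exp (-(v / x)) := Real.exp_pos _
    have hE1 : Real.exp (-(v / x)) ≤ 1 := by
      apply Real.exp_le_one_iff.mpr
      have : 0 < v / x := div_pos hv hx0
      linarith
    have hkey : 0 < 3 * x ^ 2 - 2 * v * x - 1 := by nlinarith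
    have hterm : 0 < (c * Real.exp (-(v / x)) * (v * (x ^ 2)⁻¹)) * x := by positivity
    have hterm2 : 0 < c * Real.exp (-(v / x)) := by positivity
    nlinarith
  have hmono : StrictMonoOn f (Set.Ici (1:ℝ)) := by
    apply strictMonoOn_of_hasDerivWithinAt_pos (convex_Ici 1)
    · rw [hfeq]
      apply ContinuousOn.sub
      apply ContinuousOn.add
      · fun_prop
      · apply ContinuousOn.mul
        · apply ContinuousOn.sub
          · apply ContinuousOn.mul continuousOn_const
            apply Real.continuousOn_exp.comp
            · apply ContinuousOn.neg
              apply ContinuousOn.div continuousOn_const continuousOn_id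
              intro y hy
              have : (1:ℝ) ≤ y := hy
              simp only [id]
              linarith
            · exact Set.mapsTo_univ _ _
          · exact continuousOn_const
        · fun_prop
      · fun_prop
    · intro x hx
      rw [interior_Ici] at hx
      exact ((hderiv x hx).hasDerivWithinAt)
    · intro x hx
      rw [interior_Ici] at hx
      exact hpos x hx
  refine ⟨hmono, fun u₁ h₁ u₂ h₂ hf₁ hf₂ => ?_⟩
  exact hmono.injOn h₁ h₂ (hf₁.trans hf₂.symm)
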